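/- Let Ω ⊂ ℝ^d (d ≥ 1) be a bounded Lebesgue-measurable set with |Ω| > 0, equipped with Lebesgue measure, and let d′ ≥ 1. Let ᾱ > 0 and let α : [0,1] → [0, ᾱ] be convex and continuously differentiable, and let f ∈ L²(Ω)^{d′}. Let ρ_n, ρ : Ω → [0,1] be measurable with ρ_n converging weakly-* to ρ in L^∞(Ω) (∫_Ω ρ_n φ dx → ∫_Ω ρ φ dx for every φ ∈ L¹(Ω)), and let u_n, u ∈ L²(Ω)^{d′} with u_n → u strongly in L²(Ω)^{d′}. Then (1/2)∫_Ω (α(ρ)|u|² − 2 f·u) dx ≤ liminf_{n→∞} (1/2)∫_Ω (α(ρ_n)|u_n|² − 2 f·u_n) dx. -/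

import Mathlib

open MeasureTheory Filter ENNReal

private lemma aux_mul_integrable {X : Type*} [MeasurableSpace X] {μ : Measure X}
    {g h : X → ℝ} (hg : MemLp g 2 μ) (hh : MemLp h 2 μ) :
    Integrable (fun x => g x * h x) μ := by
  have h1 : MemLp (g • h) 1 μ := hh.smul hg
  exact memLp_one_iff_integrable.mp h1

private lemma aux_CS {X : Type*} [MeasurableSpace X] {μ : Measure X} {g h : X → ℝ}
    (hg : MemLp g 2 μ) (hh : MemLp h 2 μ)
    (hg0 : ∀ x, 0 ≤ g x) (hh0 : ∀ x, 0 ≤ h x) :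
    ∫ x, g x * h x ∂μ ≤ Real.sqrt (∫ x, g x ^ 2 ∂μ) * Real.sqrt (∫ x, h x ^ 2 ∂μ) := by
  have hpq : Real.HolderConjugate 2 2 := Real.HolderConjugate.two_two
  have hg2 : MemLp g (ENNReal.ofReal 2) μ := by simpa using hg
  have hh2 : MemLp h (ENNReal.ofReal 2) μ := by simpa using hh
  have H := MeasureTheory.integral_mul_le_Lp_mul_Lq_of_nonneg hpq
    (Eventually.of_forall hg0) (Eventually.of_forall hh0) hg2 hh2
  have e1 : ∀ x : ℝ, x ^ (2 : ℝ) = x ^ (2 : ℕ) := fun x => by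
    rw [show (2 : ℝ) = ((2 : ℕ) : ℝ) by norm_num, Real.rpow_natCast]
  simp_rw [e1] at H
  rw [Real.sqrt_eq_rpow, Real.sqrt_eq_rpow]
  exact H

private lemma aux_tangent {α : ℝ → ℝ} (hconv : ConvexOn ℝ (Set.Icc (0:ℝ) 1) α)
    (hdiff : DifferentiableOn ℝ α (Set.Icc (0:ℝ) 1)) {a b : ℝ}
    (ha : a ∈ Set.Icc (0:ℝ) 1) (hb : b ∈ Set.Icc (0:ℝ) 1) :
    α a + derivWithin α (Set.Icc (0:ℝ) 1) a * (b - a) ≤ α b := by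
  rcases lt_trichotomy a b with hab | rfl | hba
  · have h := hconv.derivWithin_le_slope ha hb hab (hdiff a ha)
    rw [slope_def_field] at h
    have hba' : (0:ℝ) < b - a := sub_pos.mpr hab
    have := (le_div_iff₀ hba').mp h
    linarith
  · simp
  · have h := hconv.slope_le_derivWithin hb ha hba (hdiff a ha)
    rw [slope_def_field] at h
    have hba' : (0:ℝ) < a - b := sub_pos.mpr hba
    have := (div_le_iff₀ hba').mp h
    nlinarith

theorem J1_lower_semicontinuity
    {d d' : ℕ} (hd : 1 ≤ d) (hd' : 1 ≤ d')
    (Ω : Set (Fin d → ℝ)) (hΩmeas : MeasurableSet Ω)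
    (hΩbdd : Bornology.IsBounded Ω) (hΩpos : 0 < volume Ω)
    (abar : ℝ) (habar : 0 < abar)
    (α : ℝ → ℝ)
    (hαrange : ∀ y ∈ Set.Icc (0 : ℝ) 1, α y ∈ Set.Icc (0 : ℝ) abar)
    (hαconv : ConvexOn ℝ (Set.Icc (0 : ℝ) 1) α)
    (hαC1 : ContDiffOn ℝ 1 α (Set.Icc (0 : ℝ) 1))
    (f : (Fin d → ℝ) → EuclideanSpace ℝ (Fin d'))
    (hf : MemLp f 2 (volume.restrict Ω))
    (ρn : ℕ → (Fin d → ℝ) → ℝ) (ρ : (Fin d → ℝ) → ℝ)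
    (hρnmeas : ∀ n, Measurable (ρn n)) (hρmeas : Measurable ρ)
    (hρn01 : ∀ n x, ρn n x ∈ Set.Icc (0 : ℝ) 1)
    (hρ01 : ∀ x, ρ x ∈ Set.Icc (0 : ℝ) 1)
    -- weak-* convergence of ρ_n to ρ in L^∞(Ω)
    (hweak : ∀ φ : (Fin d → ℝ) → ℝ, Integrable φ (volume.restrict Ω) →
      Tendsto (fun n => ∫ x in Ω, ρn n x * φ x) atTop
        (nhds (∫ x in Ω, ρ x * φ x)))
    (un : ℕ → (Fin d → ℝ) → EuclideanSpace ℝ (Fin d'))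
    (u : (Fin d → ℝ) → EuclideanSpace ℝ (Fin d'))
    (hun : ∀ n, MemLp (un n) 2 (volume.restrict Ω))
    (hu : MemLp u 2 (volume.restrict Ω))
    -- strong convergence of u_n to u in L²(Ω)
    (hstrong : Tendsto (fun n => ∫ x in Ω, ‖un n x - u x‖ ^ 2) atTop (nhds 0)) :
    (1 / 2) * (∫ x in Ω, (α (ρ x) * ‖u x‖ ^ 2 - 2 * (inner ℝ (f x) (u x) : ℝ))) ≤
      liminf (fun n =>
        (1 / 2) * ∫ x in Ω, (α (ρn n x) * ‖un n x‖ ^ 2 - 2 * (inner ℝ (f x) (un n x) : ℝ)))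
        atTop := by
  set μ := volume.restrict Ω with hμdef
  -- clamp function
  set π : ℝ → ℝ := fun y => max 0 (min y 1) with hπdef
  have hπcont : Continuous π := continuous_const.max (continuous_id.min continuous_const)
  have hπmem : ∀ y, π y ∈ Set.Icc (0:ℝ) 1 := fun y =>
    ⟨le_max_left _ _, max_le zero_le_one (min_le_right _ _)⟩
  have hπeq : ∀ y ∈ Set.Icc (0:ℝ) 1, π y = y := fun y hy => by
    simp only [hπdef]; rw [min_eq_left hy.2, max_eq_right hy.1]
  have hαcontOn : ContinuousOn α (Set.Icc 0 1) := hαC1.continuousOn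
  set α' : ℝ → ℝ := derivWithin α (Set.Icc (0:ℝ) 1) with hα'def
  have hdiff : DifferentiableOn ℝ α (Set.Icc (0:ℝ) 1) := hαC1.differentiableOn one_ne_zero
  have hα'cont : ContinuousOn α' (Set.Icc (0:ℝ) 1) :=
    hαC1.continuousOn_derivWithin (uniqueDiffOn_Icc one_pos) le_rfl
  obtain ⟨C, hC⟩ : ∃ C, ∀ y ∈ Set.Icc (0:ℝ) 1, ‖α' y‖ ≤ C :=
    isCompact_Icc.exists_bound_of_continuousOn hα'cont
  have hC0 : 0 ≤ C := (norm_nonneg _).trans (hC 0 ⟨le_rfl, zero_le_one⟩)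
  -- measurability of compositions
  have hβ : Measurable fun y => α (π y) :=
    (hαcontOn.comp_continuous hπcont hπmem).measurable
  have hβ' : Measurable fun y => α' (π y) :=
    (hα'cont.comp_continuous hπcont hπmem).measurable
  have hαρn : ∀ n, Measurable fun x => α (ρn n x) := fun n => by
    have he : (fun x => α (ρn n x)) = fun x => α (π (ρn n x)) := by
      funext x; rw [hπeq _ (hρn01 n x)]
    rw [he]; exact hβ.comp (hρnmeas n)
  have hαρ : Measurable fun x => α (ρ x) := by
    have he : (fun x => α (ρ x)) = fun x => α (π (ρ x)) := by
      funext x; rw [hπeq _ (hρ01 x)]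
    rw [he]; exact hβ.comp hρmeas
  have hα'ρ : Measurable fun x => α' (ρ x) := by
    have he : (fun x => α' (ρ x)) = fun x => α' (π (ρ x)) := by
      funext x; rw [hπeq _ (hρ01 x)]
    rw [he]; exact hβ'.comp hρmeas
  -- integrability of squared norms
  have hpow : ∀ (v : (Fin d → ℝ) → EuclideanSpace ℝ (Fin d')), MemLp v 2 μ →
      Integrable (fun x => ‖v x‖ ^ 2) μ := by
    intro v hv
    have h2 : ∀ r : ℝ, r ^ ((2:ℝ≥0∞)).toReal = r ^ (2:ℕ) := fun r => by
      rw [ENNReal.toReal_ofNat, show (2:ℝ) = ((2:ℕ):ℝ) by norm_num, Real.rpow_natCast]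
    have := hv.integrable_norm_rpow (by norm_num) (by norm_num)
    simpa [h2] using this
  have hNu : Integrable (fun x => ‖u x‖ ^ 2) μ := hpow u hu
  have hNd : ∀ n, Integrable (fun x => ‖un n x - u x‖ ^ 2) μ :=
    fun n => hpow _ ((hun n).sub hu)
  -- inner products are integrable
  have hinner_int : ∀ (v : (Fin d → ℝ) → EuclideanSpace ℝ (Fin d')), MemLp v 2 μ →
      Integrable (fun x => (inner ℝ (f x) (v x) : ℝ)) μ := by
    intro v hv
    have hm : AEStronglyMeasurable (fun x => (inner ℝ (f x) (v x) : ℝ)) μ :=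
      AEStronglyMeasurable.inner hf.1 hv.1
    have hb : Integrable (fun x => ‖f x‖ * ‖v x‖) μ := aux_mul_integrable hf.norm hv.norm
    exact hb.mono' hm (Eventually.of_forall fun x => by
      simpa using norm_inner_le_norm (𝕜 := ℝ) (f x) (v x))
  -- ε n and its square root tend to zero
  have hε0 : ∀ n, (0:ℝ) ≤ ∫ x, ‖un n x - u x‖ ^ 2 ∂μ :=
    fun n => integral_nonneg fun x => by positivity
  have hsq : Tendsto (fun n => Real.sqrt (∫ x, ‖un n x - u x‖ ^ 2 ∂μ)) atTop (nhds 0) := by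
    have := (Real.continuous_sqrt.tendsto 0).comp hstrong
    simpa [Function.comp_def] using this
  -- Cauchy-Schwarz bounds
  have hCSu : ∀ n, ∫ x, ‖u x‖ * ‖un n x - u x‖ ∂μ ≤
      Real.sqrt (∫ x, ‖u x‖ ^ 2 ∂μ) * Real.sqrt (∫ x, ‖un n x - u x‖ ^ 2 ∂μ) := fun n =>
    aux_CS hu.norm ((hun n).sub hu).norm (fun x => norm_nonneg _) (fun x => norm_nonneg _)
  have hCSf : ∀ n, ∫ x, ‖f x‖ * ‖un n x - u x‖ ∂μ ≤
      Real.sqrt (∫ x, ‖f x‖ ^ 2 ∂μ) * Real.sqrt (∫ x, ‖un n x - u x‖ ^ 2 ∂μ) := fun n =>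
    aux_CS hf.norm ((hun n).sub hu).norm (fun x => norm_nonneg _) (fun x => norm_nonneg _)
  -- convergence of the linear term
  set Cn : ℕ → ℝ := fun n => ∫ x, (inner ℝ (f x) (un n x) : ℝ) ∂μ with hCndef
  set Cinf : ℝ := ∫ x, (inner ℝ (f x) (u x) : ℝ) ∂μ with hCinfdef
  have hCtend : Tendsto Cn atTop (nhds Cinf) := by
    have hmul_int : ∀ n, Integrable (fun x => ‖f x‖ * ‖un n x - u x‖) μ := fun n =>
      aux_mul_integrable hf.norm ((hun n).sub hu).norm
    have key : ∀ n, ‖Cn n - Cinf‖ ≤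
        Real.sqrt (∫ x, ‖f x‖ ^ 2 ∂μ) * Real.sqrt (∫ x, ‖un n x - u x‖ ^ 2 ∂μ) := by
      intro n
      have hdint := hinner_int _ ((hun n).sub hu)
      have hCe : Cn n - Cinf = ∫ x, (inner ℝ (f x) (un n x - u x) : ℝ) ∂μ := by
        rw [hCndef, hCinfdef, ← integral_sub (hinner_int _ (hun n)) (hinner_int _ hu)]
        congr 1; funext x; rw [inner_sub_right]
      rw [hCe]
      calc ‖∫ x, (inner ℝ (f x) (un n x - u x) : ℝ) ∂μ‖
          ≤ ∫ x, ‖(inner ℝ (f x) (un n x - u x) : ℝ)‖ ∂μ := norm_integral_le_integral_norm _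
        _ ≤ ∫ x, ‖f x‖ * ‖un n x - u x‖ ∂μ := by
            refine integral_mono hdint.norm (hmul_int n) fun x => ?_
            exact norm_inner_le_norm _ _
        _ ≤ _ := hCSf n
    have h0 : Tendsto (fun n => Real.sqrt (∫ x, ‖f x‖ ^ 2 ∂μ) *
        Real.sqrt (∫ x, ‖un n x - u x‖ ^ 2 ∂μ)) atTop (nhds 0) := by
      simpa using hsq.const_mul (Real.sqrt (∫ x, ‖f x‖ ^ 2 ∂μ))
    have h1 : Tendsto (fun n => Cn n - Cinf) atTop (nhds 0) := squeeze_zero_norm key h0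
    simpa using h1.add_const Cinf
  -- integrability of the main integrands
  have hint_αu : ∀ n, Integrable (fun x => α (ρn n x) * ‖u x‖ ^ 2) μ := by
    intro n
    refine (hNu.const_mul abar).mono' ((hαρn n).aestronglyMeasurable.mul hNu.1)
      (Eventually.of_forall fun x => ?_)
    have hα := hαrange _ (hρn01 n x)
    have hN : (0:ℝ) ≤ ‖u x‖ ^ 2 := by positivity
    rw [Real.norm_eq_abs, abs_mul, abs_of_nonneg hα.1, abs_of_nonneg hN]
    exact mul_le_mul_of_nonneg_right hα.2 hN
  have hint_αun : ∀ n, Integrable (fun x => α (ρn n x) * ‖un n x‖ ^ 2) μ := by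
    intro n
    have hNun := hpow _ (hun n)
    refine (hNun.const_mul abar).mono' ((hαρn n).aestronglyMeasurable.mul hNun.1)
      (Eventually.of_forall fun x => ?_)
    have hα := hαrange _ (hρn01 n x)
    have hN : (0:ℝ) ≤ ‖un n x‖ ^ 2 := by positivity
    rw [Real.norm_eq_abs, abs_mul, abs_of_nonneg hα.1, abs_of_nonneg hN]
    exact mul_le_mul_of_nonneg_right hα.2 hN
  have hint_αρu : Integrable (fun x => α (ρ x) * ‖u x‖ ^ 2) μ := by
    refine (hNu.const_mul abar).mono' (hαρ.aestronglyMeasurable.mul hNu.1)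
      (Eventually.of_forall fun x => ?_)
    have hα := hαrange _ (hρ01 x)
    have hN : (0:ℝ) ≤ ‖u x‖ ^ 2 := by positivity
    rw [Real.norm_eq_abs, abs_mul, abs_of_nonneg hα.1, abs_of_nonneg hN]
    exact mul_le_mul_of_nonneg_right hα.2 hN
  set An : ℕ → ℝ := fun n => ∫ x, α (ρn n x) * ‖u x‖ ^ 2 ∂μ with hAndef
  set Bn : ℕ → ℝ := fun n => ∫ x, α (ρn n x) * ‖un n x‖ ^ 2 ∂μ with hBndef
  set K : ℝ := ∫ x, α (ρ x) * ‖u x‖ ^ 2 ∂μ with hKdef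
  -- B n - A n → 0
  have hb0 : Tendsto (fun n => Bn n - An n) atTop (nhds 0) := by
    have hb_bound : ∀ n, ‖Bn n - An n‖ ≤
        abar * (3 * (∫ x, ‖un n x - u x‖ ^ 2 ∂μ) +
          2 * ∫ x, ‖u x‖ * ‖un n x - u x‖ ∂μ) := by
      intro n
      have hmul_int : Integrable (fun x => ‖u x‖ * ‖un n x - u x‖) μ :=
        aux_mul_integrable hu.norm ((hun n).sub hu).norm
      have hRHSint : Integrable
          (fun x => abar * (3 * ‖un n x - u x‖ ^ 2 + 2 * (‖u x‖ * ‖un n x - u x‖))) μ :=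
        (((hNd n).const_mul 3).add (hmul_int.const_mul 2)).const_mul abar
      have hsub : Bn n - An n =
          ∫ x, (α (ρn n x) * ‖un n x‖ ^ 2 - α (ρn n x) * ‖u x‖ ^ 2) ∂μ :=
        (integral_sub (hint_αun n) (hint_αu n)).symm
      rw [hsub]
      calc ‖∫ x, (α (ρn n x) * ‖un n x‖ ^ 2 - α (ρn n x) * ‖u x‖ ^ 2) ∂μ‖
          ≤ ∫ x, ‖α (ρn n x) * ‖un n x‖ ^ 2 - α (ρn n x) * ‖u x‖ ^ 2‖ ∂μ :=
            norm_integral_le_integral_norm _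
        _ ≤ ∫ x, abar * (3 * ‖un n x - u x‖ ^ 2 + 2 * (‖u x‖ * ‖un n x - u x‖)) ∂μ := by
            refine integral_mono ((hint_αun n).sub (hint_αu n)).norm hRHSint fun x => ?_
            have hα := hαrange _ (hρn01 n x)
            have habs : |‖un n x‖ - ‖u x‖| ≤ ‖un n x - u x‖ := abs_norm_sub_norm_le _ _
            obtain ⟨h1, h2⟩ := abs_le.mp habs
            rw [← mul_sub, Real.norm_eq_abs, abs_mul, abs_of_nonneg hα.1]
            have key : |‖un n x‖ ^ 2 - ‖u x‖ ^ 2| ≤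
                3 * ‖un n x - u x‖ ^ 2 + 2 * (‖u x‖ * ‖un n x - u x‖) := by
              rw [abs_le]
              constructor <;>
                nlinarith [norm_nonneg (un n x - u x), norm_nonneg (u x), norm_nonneg (un n x)]
            exact mul_le_mul hα.2 key (abs_nonneg _) habar.le
        _ = abar * (3 * (∫ x, ‖un n x - u x‖ ^ 2 ∂μ) +
              2 * ∫ x, ‖u x‖ * ‖un n x - u x‖ ∂μ) := by
            rw [integral_const_mul _ _, integral_add ((hNd n).const_mul 3) (hmul_int.const_mul 2),
              integral_const_mul _ _, integral_const_mul _ _]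
    have hIn : Tendsto (fun n => ∫ x, ‖u x‖ * ‖un n x - u x‖ ∂μ) atTop (nhds 0) := by
      refine squeeze_zero (fun n => integral_nonneg fun x =>
        mul_nonneg (norm_nonneg _) (norm_nonneg _)) hCSu ?_
      simpa using hsq.const_mul (Real.sqrt (∫ x, ‖u x‖ ^ 2 ∂μ))
    have hlim : Tendsto (fun n => abar * (3 * (∫ x, ‖un n x - u x‖ ^ 2 ∂μ) +
        2 * ∫ x, ‖u x‖ * ‖un n x - u x‖ ∂μ)) atTop (nhds 0) := by
      have := ((hstrong.const_mul 3).add (hIn.const_mul 2)).const_mul abar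
      simpa using this
    exact squeeze_zero_norm hb_bound hlim
  -- the weak-* term
  set φ : (Fin d → ℝ) → ℝ := fun x => α' (ρ x) * ‖u x‖ ^ 2 with hφdef
  have hφmeas : AEStronglyMeasurable φ μ := hα'ρ.aestronglyMeasurable.mul hNu.1
  have hφint : Integrable φ μ := by
    refine (hNu.const_mul C).mono' hφmeas (Eventually.of_forall fun x => ?_)
    have hN : (0:ℝ) ≤ ‖u x‖ ^ 2 := by positivity
    rw [hφdef, Real.norm_eq_abs, abs_mul, abs_of_nonneg hN]
    exact mul_le_mul_of_nonneg_right (hC _ (hρ01 x)) hN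
  have hρnφ : ∀ n, Integrable (fun x => ρn n x * φ x) μ := by
    intro n
    refine hφint.abs.mono' ((hρnmeas n).aestronglyMeasurable.mul hφmeas)
      (Eventually.of_forall fun x => ?_)
    rw [Real.norm_eq_abs, abs_mul]
    have h01 := hρn01 n x
    calc |ρn n x| * |φ x| ≤ 1 * |φ x| :=
          mul_le_mul_of_nonneg_right (abs_le.mpr ⟨by linarith [h01.1], h01.2⟩) (abs_nonneg _)
      _ = |φ x| := one_mul _
  have hρφ : Integrable (fun x => ρ x * φ x) μ := by
    refine hφint.abs.mono' (hρmeas.aestronglyMeasurable.mul hφmeas)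
      (Eventually.of_forall fun x => ?_)
    rw [Real.norm_eq_abs, abs_mul]
    have h01 := hρ01 x
    calc |ρ x| * |φ x| ≤ 1 * |φ x| :=
          mul_le_mul_of_nonneg_right (abs_le.mpr ⟨by linarith [h01.1], h01.2⟩) (abs_nonneg _)
      _ = |φ x| := one_mul _
  have he0 : Tendsto (fun n => (∫ x, ρn n x * φ x ∂μ) - ∫ x, ρ x * φ x ∂μ) atTop (nhds 0) := by
    simpa using (hweak φ hφint).sub_const (∫ x, ρ x * φ x ∂μ)
  -- convexity: A n ≥ K + e n
  have hAn_ge : ∀ n, K + ((∫ x, ρn n x * φ x ∂μ) - ∫ x, ρ x * φ x ∂μ) ≤ An n := by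
    intro n
    have hlhs_int : Integrable
        (fun x => α (ρ x) * ‖u x‖ ^ 2 + (ρn n x * φ x - ρ x * φ x)) μ :=
      hint_αρu.add ((hρnφ n).sub hρφ)
    have hpt : ∀ x, α (ρ x) * ‖u x‖ ^ 2 + (ρn n x * φ x - ρ x * φ x) ≤
        α (ρn n x) * ‖u x‖ ^ 2 := by
      intro x
      have ht := aux_tangent hαconv hdiff (hρ01 x) (hρn01 n x)
      have hN : (0:ℝ) ≤ ‖u x‖ ^ 2 := by positivity
      calc α (ρ x) * ‖u x‖ ^ 2 + (ρn n x * φ x - ρ x * φ x)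
          = (α (ρ x) + α' (ρ x) * (ρn n x - ρ x)) * ‖u x‖ ^ 2 := by
            simp only [hφdef]; ring
        _ ≤ α (ρn n x) * ‖u x‖ ^ 2 := mul_le_mul_of_nonneg_right ht hN
    have hsubint : Integrable (fun x => ρn n x * φ x - ρ x * φ x) μ := (hρnφ n).sub hρφ
    have hmono := integral_mono hlhs_int (hint_αu n) hpt
    rwa [integral_add hint_αρu hsubint, integral_sub (hρnφ n) hρφ] at hmono
  -- assemble
  have hIeq : ∀ n, (1 / 2 : ℝ) *
      ∫ x, (α (ρn n x) * ‖un n x‖ ^ 2 - 2 * (inner ℝ (f x) (un n x) : ℝ)) ∂μ =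
      (1 / 2) * Bn n - Cn n := by
    intro n
    rw [integral_sub (hint_αun n) ((hinner_int _ (hun n)).const_mul 2), integral_const_mul _ _]
    rw [hBndef, hCndef]
    ring
  have hLeq : (1 / 2 : ℝ) *
      ∫ x, (α (ρ x) * ‖u x‖ ^ 2 - 2 * (inner ℝ (f x) (u x) : ℝ)) ∂μ =
      (1 / 2) * K - Cinf := by
    rw [integral_sub hint_αρu ((hinner_int _ hu).const_mul 2), integral_const_mul _ _]
    rw [hKdef, hCinfdef]
    ring
  set w : ℕ → ℝ := fun n =>
    (1 / 2) * (K + ((∫ x, ρn n x * φ x ∂μ) - ∫ x, ρ x * φ x ∂μ) + (Bn n - An n)) - Cn n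
    with hwdef
  have hwI : ∀ n, w n ≤ (1 / 2 : ℝ) *
      ∫ x, (α (ρn n x) * ‖un n x‖ ^ 2 - 2 * (inner ℝ (f x) (un n x) : ℝ)) ∂μ := by
    intro n
    rw [hIeq n]
    have h := hAn_ge n
    simp only [hwdef]
    nlinarith [h]
  have hw : Tendsto w atTop (nhds ((1 / 2) * K - Cinf)) := by
    have h1 : Tendsto (fun n => K + ((∫ x, ρn n x * φ x ∂μ) - ∫ x, ρ x * φ x ∂μ)
        + (Bn n - An n)) atTop (nhds K) := by
      have := (he0.const_add K).add hb0
      simpa using this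
    have := (h1.const_mul (1/2 : ℝ)).sub hCtend
    simpa [hwdef, mul_comm] using this
  have h1 : liminf w atTop = (1 / 2) * K - Cinf := hw.liminf_eq
  have h2 : liminf w atTop ≤ liminf (fun n => (1 / 2 : ℝ) *
      ∫ x, (α (ρn n x) * ‖un n x‖ ^ 2 - 2 * (inner ℝ (f x) (un n x) : ℝ)) ∂μ) atTop := by
    have hA_ub : ∀ n, An n ≤ abar * ∫ x, ‖u x‖ ^ 2 ∂μ := by
      intro n
      calc An n ≤ ∫ x, abar * ‖u x‖ ^ 2 ∂μ :=
          integral_mono (hint_αu n) (hNu.const_mul abar) fun x =>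
            mul_le_mul_of_nonneg_right (hαrange _ (hρn01 n x)).2 (by positivity)
        _ = abar * ∫ x, ‖u x‖ ^ 2 ∂μ := integral_const_mul _ _
    have hIub : IsCoboundedUnder (· ≥ ·) atTop (fun n => (1 / 2 : ℝ) *
        ∫ x, (α (ρn n x) * ‖un n x‖ ^ 2 - 2 * (inner ℝ (f x) (un n x) : ℝ)) ∂μ) := by
      obtain ⟨M2, hM2⟩ := hb0.isBoundedUnder_le
      obtain ⟨M3, hM3⟩ := hCtend.isBoundedUnder_ge
      rw [eventually_map] at hM2 hM3
      refine isCoboundedUnder_ge_of_eventually_le atTop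
        (x := (1/2) * (abar * (∫ x, ‖u x‖ ^ 2 ∂μ) + M2) - M3) ?_
      filter_upwards [hM2, hM3] with n hn2 hn3
      rw [hIeq n]
      have := hA_ub n
      linarith
    exact liminf_le_liminf (Eventually.of_forall hwI) hw.isBoundedUnder_ge hIub
  rw [hLeq, ← h1]
  exact h2
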